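/- arXiv:1504.07066 — 4 statements merged into one kernel-verified Lean document; each statement's English description precedes it below -/
import Mathlib

section
/- Let T := max(s + p_max, ⌈(k·s + ∑_j p j)/m⌉). There exists an assignment σ : Fin n → Fin m with makespan(σ) ≤ T + s + p_max − 1; in particular, since T ≤ OPT, one has OPT ≤ T + s + p_max − 1 < 2T ≤ 2·OPT, so this greedy schedule is a 2-approximation. -/
open Finset

/-- Load of machine `i` under assignment `σ`: total processing time of jobs assigned
to `i` plus one setup of length `s` per distinct class appearing on `i`. -/
def mLoad {n m k : ℕ} (p : Fin n → ℕ) (c : Fin n → Fin k) (s : ℕ)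
    (σ : Fin n → Fin m) (i : Fin m) : ℕ :=
  (∑ j ∈ univ.filter (fun j => σ j = i), p j)
    + s * ((univ.filter (fun j => σ j = i)).image c).card

/-- Makespan of assignment `σ`. -/
def mMakespan {n m k : ℕ} (p : Fin n → ℕ) (c : Fin n → Fin k) (s : ℕ)
    (σ : Fin n → Fin m) : ℕ :=
  univ.sup (mLoad p c s σ)

/-- Optimal makespan: minimum over all assignments. -/
noncomputable def mOPT (n m k : ℕ) (p : Fin n → ℕ) (c : Fin n → Fin k) (s : ℕ) : ℕ :=
  sInf {M | ∃ σ : Fin n → Fin m, mMakespan p c s σ = M}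

/-- Every schedule has makespan at least `s + p_max` and at least the average bound. -/
lemma greedy_aux_lb (n m k s : ℕ) (hn : 1 ≤ n)
    (p : Fin n → ℕ) (c : Fin n → Fin k) (hc : Function.Surjective c)
    (σ : Fin n → Fin m) :
    s + univ.sup p ≤ mMakespan p c s σ ∧
    k * s + ∑ j, p j ≤ m * mMakespan p c s σ := by
  classical
  have huniv : (univ : Finset (Fin n)).Nonempty := ⟨⟨0, hn⟩, mem_univ _⟩
  constructor
  · obtain ⟨j0, _, hj0⟩ := Finset.exists_mem_eq_sup univ huniv p
    set i := σ j0 with hi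
    have hj0mem : j0 ∈ univ.filter (fun j => σ j = i) := by simp [hi]
    have h1 : p j0 ≤ ∑ j ∈ univ.filter (fun j => σ j = i), p j :=
      Finset.single_le_sum (fun _ _ => Nat.zero_le _) hj0mem
    have h2 : 1 ≤ ((univ.filter (fun j => σ j = i)).image c).card := by
      apply Finset.card_pos.mpr
      exact ⟨c j0, Finset.mem_image_of_mem c hj0mem⟩
    have h3 : mLoad p c s σ i ≤ mMakespan p c s σ := Finset.le_sup (mem_univ i)
    have : s + univ.sup p ≤ mLoad p c s σ i := by
      unfold mLoad
      calc s + univ.sup p = p j0 + s * 1 := by omega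
        _ ≤ _ := by
            exact Nat.add_le_add h1 (Nat.mul_le_mul_left s h2)
    omega
  · -- sum of loads
    have hsum : ∑ i, mLoad p c s σ i
        = (∑ j, p j) + s * ∑ i, ((univ.filter (fun j => σ j = i)).image c).card := by
      unfold mLoad
      rw [Finset.sum_add_distrib, Finset.sum_fiberwise univ σ p, Finset.mul_sum]
    have hk : k ≤ ∑ i, ((univ.filter (fun j => σ j = i)).image c).card := by
      have himg : (univ : Finset (Fin k))
          ⊆ univ.biUnion (fun i : Fin m => (univ.filter (fun j => σ j = i)).image c) := by
        intro x _
        obtain ⟨j, hj⟩ := hc x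
        refine Finset.mem_biUnion.mpr ⟨σ j, mem_univ _, ?_⟩
        exact Finset.mem_image.mpr ⟨j, by simp, hj⟩
      calc k = (univ : Finset (Fin k)).card := by simp
        _ ≤ (univ.biUnion (fun i : Fin m => (univ.filter (fun j => σ j = i)).image c)).card :=
            Finset.card_le_card himg
        _ ≤ _ := Finset.card_biUnion_le
    have hle : ∑ i, mLoad p c s σ i ≤ m * mMakespan p c s σ := by
      calc ∑ i, mLoad p c s σ i ≤ ∑ _i : Fin m, mMakespan p c s σ :=
            Finset.sum_le_sum (fun i _ => Finset.le_sup (mem_univ i))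
        _ = m * mMakespan p c s σ := by simp [mul_comm]
    have : k * s ≤ s * ∑ i, ((univ.filter (fun j => σ j = i)).image c).card := by
      rw [mul_comm]
      exact Nat.mul_le_mul_left s hk
    omega

/-- The greedy/next-fit construction: a schedule of makespan `≤ T + s + pmax - 1`. -/
lemma greedy_aux_ex (n m k s T pmax : ℕ) (hn : 1 ≤ n) (hm : 1 ≤ m) (hs : 1 ≤ s)
    (p : Fin n → ℕ) (hp : ∀ j, 1 ≤ p j) (c : Fin n → Fin k)
    (hpmax : ∀ j, p j ≤ pmax) (hT0 : 1 ≤ T)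
    (hT2 : k * s + ∑ j, p j ≤ m * T) :
    ∃ σ : Fin n → Fin m, mMakespan p c s σ ≤ T + s + pmax - 1 := by
  classical
  set e : Equiv.Perm (Fin n) := Tuple.sort c with he
  set d : Fin n → Fin k := c ∘ e with hd
  have hdmono : Monotone d := Tuple.monotone_sort c
  set q : Fin n → ℕ := p ∘ e with hq
  have hq1 : ∀ t, 1 ≤ q t := fun t => hp (e t)
  have hqmax : ∀ t, q t ≤ pmax := fun t => hpmax (e t)
  set IsLast : Fin n → Prop := fun t => ∀ u, d u = d t → u ≤ t with hIsLast
  have hIL : DecidablePred IsLast := fun t => by unfold IsLast; infer_instance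
  set incN : ℕ → ℕ := fun r => if h : r < n then q ⟨r, h⟩ + (if IsLast ⟨r, h⟩ then s else 0) else 0
    with hincN
  set B : ℕ → ℕ := fun t => ∑ r ∈ Finset.range t, incN r with hB
  have hincFin : ∀ t : Fin n, incN t.val = q t + (if IsLast t then s else 0) := by
    intro t; simp only [hincN, dif_pos t.isLt]
  have hinc1 : ∀ t : Fin n, 1 ≤ incN t.val := by
    intro t; rw [hincFin t]; have := hq1 t; omega
  have hBmono : Monotone B :=
    fun a b hab => Finset.sum_le_sum_of_subset (Finset.range_subset_range.mpr hab)
  have hBsucc : ∀ t : ℕ, B (t + 1) = B t + incN t := fun t => Finset.sum_range_succ incN t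
  -- the number of "last" positions is at most k
  have hlastcard : #(univ.filter IsLast) ≤ k := by
    have hinj : Set.InjOn d (univ.filter IsLast : Finset (Fin n)) := by
      intro t1 h1 t2 h2 h12
      have ht1 : IsLast t1 := by simpa using (Finset.mem_filter.mp h1).2
      have ht2 : IsLast t2 := by simpa using (Finset.mem_filter.mp h2).2
      exact le_antisymm (ht2 t1 h12) (ht1 t2 h12.symm)
    calc #(univ.filter IsLast) = ((univ.filter IsLast).image d).card :=
          (Finset.card_image_of_injOn hinj).symm
      _ ≤ (univ : Finset (Fin k)).card := Finset.card_le_card (Finset.subset_univ _)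
      _ = k := by simp
  -- total bound
  have hBn : B n ≤ m * T := by
    have h1 : B n = ∑ t : Fin n, incN t.val := by
      rw [hB]; exact (Fin.sum_univ_eq_sum_range incN n).symm
    have h2 : ∑ t : Fin n, incN t.val
        = (∑ t, q t) + #(univ.filter IsLast) * s := by
      rw [Finset.sum_congr rfl (fun t _ => hincFin t), Finset.sum_add_distrib,
        Finset.sum_ite, Finset.sum_const, Finset.sum_const]
      simp [mul_comm]
    have h3 : ∑ t, q t = ∑ j, p j := Equiv.sum_comp e p
    have h4 : #(univ.filter IsLast) * s ≤ k * s := Nat.mul_le_mul_right s hlastcard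
    omega
  have hBlt : ∀ t : Fin n, B t.val < m * T := by
    intro t
    have h1 : B t.val + incN t.val = B (t.val + 1) := (hBsucc t.val).symm
    have h2 : B (t.val + 1) ≤ B n := hBmono t.isLt
    have := hinc1 t
    omega
  -- the schedule
  set machine : Fin n → Fin m := fun t => ⟨B t.val / T,
    (Nat.div_lt_iff_lt_mul hT0).mpr (hBlt t)⟩ with hmachine
  refine ⟨fun j => machine (e.symm j), ?_⟩
  apply Finset.sup_le
  intro i _
  set Si : Finset (Fin n) := univ.filter (fun t => machine t = i) with hSi
  have hfilter : univ.filter (fun j => machine (e.symm j) = i) = Si.image e := by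
    ext j
    simp only [hSi, Finset.mem_filter, Finset.mem_image, mem_univ, true_and]
    constructor
    · intro h; exact ⟨e.symm j, h, e.apply_symm_apply j⟩
    · rintro ⟨t, ht, rfl⟩; rwa [e.symm_apply_apply]
  have hload : mLoad p c s (fun j => machine (e.symm j)) i
      = (∑ t ∈ Si, q t) + s * ((Si.image d).card) := by
    unfold mLoad
    rw [hfilter, Finset.sum_image (fun a _ b _ h => e.injective h), Finset.image_image]
    rfl
  rw [hload]
  by_cases hne : Si.Nonempty
  · set a := Si.min' hne with ha
    set b := Si.max' hne with hb
    have hma : machine a = i := by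
      have := Si.min'_mem hne; simpa [hSi] using this
    have hmb : machine b = i := by
      have := Si.max'_mem hne; simpa [hSi] using this
    have hBa : i.val * T ≤ B a.val := by
      have : B a.val / T = i.val := congrArg Fin.val hma
      rw [← this]; exact Nat.div_mul_le_self _ _
    have hBb : B b.val < i.val * T + T := by
      have hdiv : B b.val / T = i.val := congrArg Fin.val hmb
      have : B b.val / T < i.val + 1 := by omega
      have := (Nat.div_lt_iff_lt_mul hT0).mp this
      calc B b.val < (i.val + 1) * T := this
        _ = i.val * T + T := by ring
    -- Si is the interval Icc a b
    have hSIcc : Si = Finset.Icc a b := by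
      ext t
      simp only [hSi, Finset.mem_filter, mem_univ, true_and, Finset.mem_Icc]
      constructor
      · intro h; exact ⟨Si.min'_le t (by simp [hSi, h]), Si.le_max' t (by simp [hSi, h])⟩
      · rintro ⟨h1, h2⟩
        have hBt1 : B a.val ≤ B t.val := hBmono h1
        have hBt2 : B t.val ≤ B b.val := hBmono h2
        have hub : B t.val / T < i.val + 1 :=
          (Nat.div_lt_iff_lt_mul hT0).mpr (by rw [add_mul, one_mul]; omega)
        have hlb : i.val ≤ B t.val / T :=
          (Nat.le_div_iff_mul_le hT0).mpr (by omega)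
        exact Fin.ext (show B (t : ℕ) / T = (i : ℕ) by omega)
    have hab : a.val ≤ b.val := Si.min'_le b (Si.max'_mem hne)
    -- convert Fin-sums over Icc to ℕ-sums
    have hconv : ∀ f : ℕ → ℕ, ∑ r ∈ Finset.Icc a.val b.val, f r = ∑ t ∈ Finset.Icc a b, f t.val := by
      intro f
      rw [← Fin.map_valEmbedding_Icc, Finset.sum_map]
      rfl
    -- telescoping
    have htel : B a.val + ∑ r ∈ Finset.Icc a.val b.val, incN r = B (b.val + 1) := by
      have h := Finset.sum_Ico_consecutive incN (Nat.zero_le a.val)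
        (show a.val ≤ b.val + 1 by omega)
      rw [← Finset.Ico_add_one_right_eq_Icc]
      simp only [hB, Finset.range_eq_Ico]
      exact h
    have hsplit : ∑ t ∈ Finset.Icc a b, incN t.val
        = (∑ t ∈ Finset.Icc a b, q t) + #((Finset.Icc a b).filter IsLast) * s := by
      rw [Finset.sum_congr rfl (fun t _ => hincFin t), Finset.sum_add_distrib,
        Finset.sum_ite, Finset.sum_const, Finset.sum_const]
      simp [mul_comm]
    -- every class in the block, except possibly that of b, has a "last" element in the block
    have hrep : ∀ x ∈ (Finset.Icc a b).image d, x = d b ∨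
        ∃ t ∈ (Finset.Icc a b).filter IsLast, d t = x := by
      intro x hx
      obtain ⟨t, ht, rfl⟩ := Finset.mem_image.mp hx
      rw [Finset.mem_Icc] at ht
      have hFne : (univ.filter (fun u => d u = d t)).Nonempty := ⟨t, by simp⟩
      set u := (univ.filter (fun u => d u = d t)).max' hFne with hu
      have hut : d u = d t := by
        have := (univ.filter (fun u => d u = d t)).max'_mem hFne
        simpa using this
      have htu : t ≤ u := Finset.le_max' _ t (by simp)
      have hulast : IsLast u := by
        intro v hv
        exact Finset.le_max' _ v (by simp [hv, hut])
      by_cases hub : u ≤ b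
      · right
        refine ⟨u, Finset.mem_filter.mpr ⟨Finset.mem_Icc.mpr ⟨le_trans ht.1 htu, hub⟩, hulast⟩, hut⟩
      · left
        push_neg at hub
        have h1 : d t ≤ d b := hdmono ht.2
        have h2 : d b ≤ d u := hdmono (le_of_lt hub)
        rw [hut] at h2
        exact le_antisymm h1 h2
    -- card of the class image
    have hcard : ((Finset.Icc a b).image d).card
        ≤ #((Finset.Icc a b).filter IsLast) + (if IsLast b then 0 else 1) := by
      by_cases hbl : IsLast b
      · rw [if_pos hbl]
        have hsub : (Finset.Icc a b).image d ⊆ ((Finset.Icc a b).filter IsLast).image d := by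
          intro x hx
          rcases hrep x hx with h | ⟨t, ht, hdt⟩
          · subst h
            exact Finset.mem_image_of_mem d
              (Finset.mem_filter.mpr ⟨Finset.mem_Icc.mpr ⟨Si.min'_le b (Si.max'_mem hne), le_refl b⟩, hbl⟩)
          · exact Finset.mem_image.mpr ⟨t, ht, hdt⟩
        calc ((Finset.Icc a b).image d).card ≤ (((Finset.Icc a b).filter IsLast).image d).card :=
              Finset.card_le_card hsub
          _ ≤ _ := Finset.card_image_le
      · rw [if_neg hbl]
        have hsub : (Finset.Icc a b).image d
            ⊆ insert (d b) (((Finset.Icc a b).filter IsLast).image d) := by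
          intro x hx
          rcases hrep x hx with h | ⟨t, ht, hdt⟩
          · exact h ▸ Finset.mem_insert_self _ _
          · exact Finset.mem_insert_of_mem (Finset.mem_image.mpr ⟨t, ht, hdt⟩)
        calc ((Finset.Icc a b).image d).card
            ≤ (insert (d b) (((Finset.Icc a b).filter IsLast).image d)).card :=
              Finset.card_le_card hsub
          _ ≤ (((Finset.Icc a b).filter IsLast).image d).card + 1 := Finset.card_insert_le _ _
          _ ≤ _ := by
              have := Finset.card_image_le
                (s := (Finset.Icc a b).filter IsLast) (f := d)
              omega
    -- put it together
    rw [hSIcc]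
    set L := #((Finset.Icc a b).filter IsLast) with hL
    set C := ((Finset.Icc a b).image d).card with hC
    set Q := ∑ t ∈ Finset.Icc a b, q t with hQ
    have hq' : ∑ r ∈ Finset.Icc a.val b.val, incN r = Q + L * s := by
      rw [hconv incN, hsplit]
    have hBb1 : B (b.val + 1) = B b.val + incN b.val := hBsucc b.val
    have hib : incN b.val = q b + (if IsLast b then s else 0) := hincFin b
    have hqb : q b ≤ pmax := hqmax b
    by_cases hbl : IsLast b
    · rw [if_pos hbl] at hib
      have hCL : C ≤ L := by have := hcard; rw [if_pos hbl] at this; omega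
      have h1 : s * C ≤ L * s := by rw [mul_comm s C]; exact Nat.mul_le_mul_right s hCL
      omega
    · rw [if_neg hbl] at hib
      have hCL : C ≤ L + 1 := by have := hcard; rw [if_neg hbl] at this; omega
      have h1 : s * C ≤ L * s + s := by
        calc s * C ≤ s * (L + 1) := Nat.mul_le_mul_left s hCL
          _ = L * s + s := by ring
      omega
  · rw [Finset.not_nonempty_iff_eq_empty] at hne
    rw [hne]
    simp

/-- with `T = max(s + p_max, ⌈(k·s + ∑ p j)/m⌉)` there is a (greedy)
schedule with makespan at most `T + s + p_max - 1`; in particular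
`OPT ≤ T + s + p_max - 1 < 2T ≤ 2·OPT`. -/
theorem greedy_two_approx (n m k s : ℕ) (hn : 1 ≤ n) (hm : 1 ≤ m) (hs : 1 ≤ s)
    (p : Fin n → ℕ) (hp : ∀ j, 1 ≤ p j)
    (c : Fin n → Fin k) (hc : Function.Surjective c)
    (pmax T : ℕ) (hpmax : pmax = univ.sup p)
    (hT : T = max (s + pmax) ((k * s + ∑ j, p j + m - 1) / m)) :
    (∃ σ : Fin n → Fin m, mMakespan p c s σ ≤ T + s + pmax - 1) ∧
      mOPT n m k p c s ≤ T + s + pmax - 1 ∧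
      T + s + pmax - 1 < 2 * T ∧
      2 * T ≤ 2 * mOPT n m k p c s := by
  classical
  have hpm : ∀ j, p j ≤ pmax := fun j => hpmax ▸ Finset.le_sup (mem_univ j)
  have hT1 : s + pmax ≤ T := hT ▸ le_max_left _ _
  have hTc : (k * s + ∑ j, p j + m - 1) / m ≤ T := hT ▸ le_max_right _ _
  have hT0 : 1 ≤ T := by omega
  set X := k * s + ∑ j, p j with hX
  have hT2 : X ≤ m * T := by
    set Y := X + m - 1 with hY
    have h1 := Nat.div_add_mod Y m
    have h2 : Y % m < m := Nat.mod_lt Y hm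
    have h3 : X ≤ m * (Y / m) := by omega
    have h4 : m * (Y / m) ≤ m * T := Nat.mul_le_mul_left m hTc
    omega
  obtain ⟨σ0, hσ0⟩ := greedy_aux_ex n m k s T pmax hn hm hs p hp c hpm hT0 hT2
  have hmem : mMakespan p c s σ0 ∈ {M | ∃ σ : Fin n → Fin m, mMakespan p c s σ = M} :=
    ⟨σ0, rfl⟩
  have hOPTmem : mOPT n m k p c s ≤ T + s + pmax - 1 := by
    have h0 : mOPT n m k p c s ≤ mMakespan p c s σ0 := Nat.sInf_le hmem
    omega
  have hTOPT : T ≤ mOPT n m k p c s := by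
    have hsetne : {M | ∃ σ : Fin n → Fin m, mMakespan p c s σ = M}.Nonempty :=
      ⟨mMakespan p c s (fun _ => ⟨0, hm⟩), ⟨_, rfl⟩⟩
    unfold mOPT
    apply le_csInf hsetne
    rintro M ⟨σ, rfl⟩
    obtain ⟨hlb1, hlb2⟩ := greedy_aux_lb n m k s hn p c hc σ
    rw [← hpmax] at hlb1
    have hceil : (X + m - 1) / m ≤ mMakespan p c s σ := by
      rw [Nat.div_le_iff_le_mul_add_pred hm]
      omega
    rw [hT, hX] at *
    exact max_le (by omega) hceil
  refine ⟨⟨σ0, hσ0⟩, hOPTmem, by omega, by omega⟩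
end

section
/- Let T : ℕ and let σ be an assignment with makespan(σ) ≤ T. If two distinct jobs j₁ ≠ j₂ of the same class (c j₁ = c j₂) are assigned to the same machine M and satisfy 2·p j₁ ≥ T + 1 − 2s and 2·p j₂ ≥ T + 1 − 2s, then every job assigned to M belongs to the class c j₁; i.e., a machine processing two large jobs of the same class is an exclusive machine of that class. -/
open Finset

/-- in a schedule with makespan at most `T`, a machine processing two
large jobs (`2·p j ≥ T + 1 - 2s`) of the same class is an exclusive machine of that
class. -/
theorem two_large_same_class_exclusive (n m k s : ℕ)
    (hn : 1 ≤ n) (hm : 1 ≤ m) (hs : 1 ≤ s)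
    (p : Fin n → ℕ) (hp : ∀ j, 1 ≤ p j)
    (c : Fin n → Fin k) (hc : Function.Surjective c)
    (T : ℕ) (σ : Fin n → Fin m) (hmk : mMakespan p c s σ ≤ T)
    (j₁ j₂ : Fin n) (hne : j₁ ≠ j₂) (hmach : σ j₁ = σ j₂) (hcl : c j₁ = c j₂)
    (h₁ : T + 1 - 2 * s ≤ 2 * p j₁) (h₂ : T + 1 - 2 * s ≤ 2 * p j₂) :
    ∀ j : Fin n, σ j = σ j₁ → c j = c j₁ := by
  intro j hj
  by_contra hcj
  set M := σ j₁ with hM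
  set S := univ.filter (fun x => σ x = M) with hS
  have hj₁S : j₁ ∈ S := by simp [hS, hM]
  have hj₂S : j₂ ∈ S := by simp [hS, hmach.symm]
  have hjS : j ∈ S := by simp [hS, hj]
  have hloadT : mLoad p c s σ M ≤ T :=
    le_trans (Finset.le_sup (f := mLoad p c s σ) (Finset.mem_univ M)) hmk
  -- sum bound
  have hsub : ({j₁, j₂, j} : Finset (Fin n)) ⊆ S := by
    intro x hx
    simp only [Finset.mem_insert, Finset.mem_singleton] at hx
    rcases hx with rfl | rfl | rfl <;> assumption
  have hjne1 : j ≠ j₁ := fun h => hcj (by rw [h])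
  have hjne2 : j ≠ j₂ := fun h => hcj (by rw [h, ← hcl])
  have hsum : p j₁ + p j₂ + p j ≤ ∑ x ∈ S, p x := by
    calc p j₁ + p j₂ + p j = ∑ x ∈ ({j₁, j₂, j} : Finset (Fin n)), p x := by
          rw [Finset.sum_insert (by simp [hne, hjne1.symm]),
            Finset.sum_insert (by simp [hjne2.symm]), Finset.sum_singleton]
          ring
      _ ≤ ∑ x ∈ S, p x := Finset.sum_le_sum_of_subset hsub
  -- card bound
  have hcard : 2 ≤ (S.image c).card := by
    have hsub2 : ({c j₁, c j} : Finset (Fin k)) ⊆ S.image c := by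
      intro x hx
      simp only [Finset.mem_insert, Finset.mem_singleton] at hx
      rcases hx with rfl | rfl
      · exact Finset.mem_image_of_mem c hj₁S
      · exact Finset.mem_image_of_mem c hjS
    have : ({c j₁, c j} : Finset (Fin k)).card = 2 := by
      rw [Finset.card_insert_of_notMem (by simp [Ne.symm hcj]), Finset.card_singleton]
    rw [← this]
    exact Finset.card_le_card hsub2
  have hload : p j₁ + p j₂ + p j + s * 2 ≤ mLoad p c s σ M := by
    unfold mLoad
    exact Nat.add_le_add hsum (Nat.mul_le_mul_left s hcard)
  have hpj := hp j
  omega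
end

section
/- Let λ ≥ 1 be a natural number and let T : ℕ. Call a class γ tiny if λ · (∑_{j with c j = γ} p j) ≤ T. If σ is a block-schedule with makespan M, then there exists a block-schedule σ' such that λ · makespan(σ') ≤ λ·M + 2·T and, for every tiny class, all jobs of that class are assigned by σ' to a single machine. -/
open Finset

/-- `σ` is a block-schedule w.r.t. classification `c`: for every machine index `i`
there is at most one class with some job on a machine of index `≤ i` and some job on
a machine of index `> i`. -/
def IsBlockSchedule {n m k : ℕ} (c : Fin n → Fin k) (σ : Fin n → Fin m) : Prop :=
  ∀ i : Fin m, ∀ γ₁ γ₂ : Fin k,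
    ((∃ j, c j = γ₁ ∧ σ j ≤ i) ∧ (∃ j, c j = γ₁ ∧ i < σ j)) →
    ((∃ j, c j = γ₂ ∧ σ j ≤ i) ∧ (∃ j, c j = γ₂ ∧ i < σ j)) →
    γ₁ = γ₂

/-- given a block-schedule `σ`, there is a block-schedule `σ'` whose
makespan exceeds that of `σ` by at most `2T/L` (stated as
`L·makespan(σ') ≤ L·makespan(σ) + 2T`) and in which every tiny class
(`L · workload ≤ T`) is completely scheduled on a single machine. -/
theorem tiny_classes_on_one_machine (n m k s L T : ℕ)
    (hn : 1 ≤ n) (hm : 1 ≤ m) (hs : 1 ≤ s) (hL : 1 ≤ L)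
    (p : Fin n → ℕ) (hp : ∀ j, 1 ≤ p j)
    (c : Fin n → Fin k) (hc : Function.Surjective c)
    (σ : Fin n → Fin m) (hσ : IsBlockSchedule c σ) :
    ∃ σ' : Fin n → Fin m,
      IsBlockSchedule c σ' ∧
      L * mMakespan p c s σ' ≤ L * mMakespan p c s σ + 2 * T ∧
      (∀ γ : Fin k, L * (∑ j ∈ univ.filter (fun j => c j = γ), p j) ≤ T →
        ∀ j j' : Fin n, c j = γ → c j' = γ → σ' j = σ' j') := by
  classical
  set W : Fin k → ℕ := fun γ => ∑ j ∈ univ.filter (fun j => c j = γ), p j with hW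
  have hne : ∀ γ : Fin k, ((univ.filter (fun j => c j = γ)).image σ).Nonempty := by
    intro γ
    obtain ⟨j, hj⟩ := hc γ
    exact ⟨σ j, mem_image.2 ⟨j, mem_filter.2 ⟨mem_univ _, hj⟩, rfl⟩⟩
  set μ : Fin k → Fin m := fun γ => ((univ.filter (fun j => c j = γ)).image σ).min' (hne γ)
    with hμdef
  have hμmem : ∀ γ, ∃ j, c j = γ ∧ σ j = μ γ := by
    intro γ
    have h := Finset.min'_mem _ (hne γ)
    rw [mem_image] at h
    obtain ⟨j, hj, hj2⟩ := h
    exact ⟨j, (mem_filter.1 hj).2, hj2⟩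
  have hμle : ∀ γ j, c j = γ → μ γ ≤ σ j := by
    intro γ j hj
    exact Finset.min'_le _ _ (mem_image.2 ⟨j, mem_filter.2 ⟨mem_univ _, hj⟩, rfl⟩)
  set σ' : Fin n → Fin m := fun j => if L * W (c j) ≤ T then μ (c j) else σ j with hσ'def
  have hblock : IsBlockSchedule c σ' := by
    intro i γ₁ γ₂ h1 h2
    have key : ∀ γ : Fin k, ((∃ j, c j = γ ∧ σ' j ≤ i) ∧ (∃ j, c j = γ ∧ i < σ' j)) →
        ((∃ j, c j = γ ∧ σ j ≤ i) ∧ (∃ j, c j = γ ∧ i < σ j)) := by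
      rintro γ ⟨⟨j1, hc1, hle⟩, ⟨j2, hc2, hlt⟩⟩
      by_cases ht : L * W γ ≤ T
      · exfalso
        have e1 : σ' j1 = μ γ := by simp [hσ'def, hc1, ht]
        have e2 : σ' j2 = μ γ := by simp [hσ'def, hc2, ht]
        rw [e1] at hle; rw [e2] at hlt
        exact absurd hle (not_le.2 hlt)
      · have e1 : σ' j1 = σ j1 := by simp [hσ'def, hc1, ht]
        have e2 : σ' j2 = σ j2 := by simp [hσ'def, hc2, ht]
        exact ⟨⟨j1, hc1, e1 ▸ hle⟩, ⟨j2, hc2, e2 ▸ hlt⟩⟩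
    exact hσ i γ₁ γ₂ (key γ₁ h1) (key γ₂ h2)
  have hbound : ∀ i : Fin m, L * mLoad p c s σ' i ≤ L * mLoad p c s σ i + T := by
    intro i
    set A := univ.filter (fun j => σ' j = i) with hA
    set B := univ.filter (fun j => σ j = i) with hB
    have hsetup : (A.image c).card ≤ (B.image c).card := by
      apply Finset.card_le_card
      intro γ hγ
      rw [mem_image] at hγ ⊢
      obtain ⟨j, hjA, hjc⟩ := hγ
      have hji : σ' j = i := (mem_filter.1 hjA).2
      by_cases ht : L * W (c j) ≤ T
      · have hμi : μ (c j) = i := by simpa [hσ'def, ht] using hji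
        obtain ⟨j', hcj', hσj'⟩ := hμmem (c j)
        exact ⟨j', mem_filter.2 ⟨mem_univ _, by rw [hσj', hμi]⟩, by rw [hcj', hjc]⟩
      · have : σ' j = σ j := by simp [hσ'def, ht]
        exact ⟨j, mem_filter.2 ⟨mem_univ _, by rw [← this, hji]⟩, hjc⟩
    have hsum : ∑ j ∈ A, p j ≤ ∑ j ∈ B, p j + ∑ j ∈ A \ B, p j := by
      have h1 : ∑ j ∈ A ∩ B, p j + ∑ j ∈ A \ B, p j = ∑ j ∈ A, p j :=
        Finset.sum_inter_add_sum_sdiff A B p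
      have h2 : ∑ j ∈ A ∩ B, p j ≤ ∑ j ∈ B, p j :=
        Finset.sum_le_sum_of_subset (Finset.inter_subset_right)
      omega
    have hdiff : ∀ j ∈ A \ B, (L * W (c j) ≤ T) ∧ μ (c j) = i ∧ i < σ j := by
      intro j hj
      rw [Finset.mem_sdiff] at hj
      have hji : σ' j = i := (mem_filter.1 hj.1).2
      have hjB : σ j ≠ i := by
        intro h
        exact hj.2 (mem_filter.2 ⟨mem_univ _, h⟩)
      by_cases ht : L * W (c j) ≤ T
      · have hμi : μ (c j) = i := by simpa [hσ'def, ht] using hji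
        have hle : i ≤ σ j := hμi ▸ hμle (c j) j rfl
        exact ⟨ht, hμi, lt_of_le_of_ne hle (Ne.symm hjB)⟩
      · exact absurd (by simpa [hσ'def, ht] using hji) hjB
    have hextra : L * ∑ j ∈ A \ B, p j ≤ T := by
      rcases (A \ B).eq_empty_or_nonempty with he | ⟨j0, hj0⟩
      · simp [he]
      · obtain ⟨ht0, hμ0, hlt0⟩ := hdiff j0 hj0
        obtain ⟨j0', hcj0', hσj0'⟩ := hμmem (c j0)
        have hcross0 : (∃ j, c j = c j0 ∧ σ j ≤ i) ∧ (∃ j, c j = c j0 ∧ i < σ j) :=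
          ⟨⟨j0', hcj0', le_of_eq (hσj0'.trans hμ0)⟩, ⟨j0, rfl, hlt0⟩⟩
        have hsame : ∀ j ∈ A \ B, c j = c j0 := by
          intro j hj
          obtain ⟨ht, hμi, hlt⟩ := hdiff j hj
          obtain ⟨j', hcj', hσj'⟩ := hμmem (c j)
          exact hσ i (c j) (c j0)
            ⟨⟨j', hcj', le_of_eq (hσj'.trans hμi)⟩, ⟨j, rfl, hlt⟩⟩ hcross0
        have hsub : A \ B ⊆ univ.filter (fun j => c j = c j0) := by
          intro j hj
          exact mem_filter.2 ⟨mem_univ _, hsame j hj⟩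
        calc L * ∑ j ∈ A \ B, p j
            ≤ L * ∑ j ∈ univ.filter (fun j => c j = c j0), p j :=
              Nat.mul_le_mul_left L (Finset.sum_le_sum_of_subset hsub)
          _ = L * W (c j0) := rfl
          _ ≤ T := ht0
    calc L * mLoad p c s σ' i
        = L * ∑ j ∈ A, p j + L * (s * (A.image c).card) := by
          rw [mLoad, Nat.mul_add]
      _ ≤ L * (∑ j ∈ B, p j + ∑ j ∈ A \ B, p j) + L * (s * (B.image c).card) := by
          gcongr
      _ = (L * ∑ j ∈ B, p j + L * (s * (B.image c).card)) + L * ∑ j ∈ A \ B, p j := by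
          ring
      _ ≤ L * mLoad p c s σ i + T := by
          rw [mLoad, Nat.mul_add]
          exact Nat.add_le_add_left hextra _
  refine ⟨σ', hblock, ?_, ?_⟩
  · obtain ⟨i0, _, hi0⟩ := Finset.exists_mem_eq_sup (univ : Finset (Fin m))
      ⟨⟨0, hm⟩, mem_univ _⟩ (mLoad p c s σ')
    rw [mMakespan, hi0]
    have h1 := hbound i0
    have h2 : mLoad p c s σ i0 ≤ mMakespan p c s σ := Finset.le_sup (mem_univ i0)
    have h3 : L * mLoad p c s σ i0 ≤ L * mMakespan p c s σ := Nat.mul_le_mul_left L h2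
    omega
  · intro γ htiny j j' hcj hcj'
    have : L * W γ ≤ T := htiny
    simp [hσ'def, hcj, hcj', this]
end

section
/- Let λ ≥ 1 be a natural number and let T : ℕ. If σ is a block-schedule for the instance with makespan M, then there exist a merging Q of the instance within classes and a block-schedule σ' of the merged instance whose makespan M' satisfies λ·M' ≤ λ·M + 4·T, such that in the merged instance every merged job of size at most T/λ (i.e., with λ·size ≤ T) belongs to a class of total workload at most T/λ (i.e., tiny jobs occur only in tiny classes). -/
open Finset

/-- Load of machine `i` for an instance whose jobs form an arbitrary finite type. -/
def gLoad {J : Type*} [Fintype J] [DecidableEq J] {m k : ℕ}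
    (p : J → ℕ) (c : J → Fin k) (s : ℕ) (σ : J → Fin m) (i : Fin m) : ℕ :=
  (∑ j ∈ univ.filter (fun j => σ j = i), p j)
    + s * ((univ.filter (fun j => σ j = i)).image c).card

/-- Makespan for an instance whose jobs form an arbitrary finite type. -/
def gMakespan {J : Type*} [Fintype J] [DecidableEq J] {m k : ℕ}
    (p : J → ℕ) (c : J → Fin k) (s : ℕ) (σ : J → Fin m) : ℕ :=
  univ.sup (gLoad p c s σ)

/-- Block-schedule property for an instance whose jobs form an arbitrary type. -/
def gIsBlockSchedule {J : Type*} {m k : ℕ} (c : J → Fin k) (σ : J → Fin m) : Prop :=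
  ∀ i : Fin m, ∀ γ₁ γ₂ : Fin k,
    ((∃ j, c j = γ₁ ∧ σ j ≤ i) ∧ (∃ j, c j = γ₁ ∧ i < σ j)) →
    ((∃ j, c j = γ₂ ∧ σ j ≤ i) ∧ (∃ j, c j = γ₂ ∧ i < σ j)) →
    γ₁ = γ₂


lemma greedy_finset {α : Type*} [LinearOrder α] (W : α → ℕ) (thr : ℕ) (S : Finset α)
    (htot : thr < ∑ i ∈ S, W i) :
    ∃ g : α → α,
      (∀ i ∈ S, g i ∈ S) ∧
      (∀ e, (∃ i ∈ S, g i = e) → thr < ∑ i ∈ S.filter (fun i => g i = e), W i) ∧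
      (∀ e, ∑ i ∈ S.filter (fun i => g i = e ∧ i < e), W i ≤ thr) ∧
      (∀ e, ∑ i ∈ S.filter (fun i => g i = e ∧ e < i), W i ≤ thr) := by
  classical
  revert htot
  induction S using Finset.strongInduction with
  | _ S ih =>
  intro htot
  have hSne : S.Nonempty := by
    by_contra h
    rw [Finset.not_nonempty_iff_eq_empty] at h
    simp [h] at htot
  have hCne : (S.filter (fun x => thr < ∑ i ∈ S.filter (fun i => i ≤ x), W i)).Nonempty := by
    refine ⟨S.max' hSne, Finset.mem_filter.mpr ⟨S.max'_mem hSne, ?_⟩⟩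
    have hfe : S.filter (fun i => i ≤ S.max' hSne) = S :=
      Finset.filter_true_of_mem (fun i hi => S.le_max' i hi)
    rw [hfe]; exact htot
  set C := S.filter (fun x => thr < ∑ i ∈ S.filter (fun i => i ≤ x), W i) with hC
  set t := C.min' hCne with htdef
  have htC : t ∈ C := C.min'_mem hCne
  have htS : t ∈ S := (Finset.mem_filter.mp htC).1
  have htsum : thr < ∑ i ∈ S.filter (fun i => i ≤ t), W i := (Finset.mem_filter.mp htC).2
  set pre := S.filter (fun i => i < t) with hpredef
  set rest := S.filter (fun i => t < i) with hrestdef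
  have hfle : S.filter (fun i => i ≤ t) = insert t pre := by
    ext i
    simp only [hpredef, Finset.mem_insert, Finset.mem_filter]
    constructor
    · rintro ⟨hi, hle⟩
      rcases eq_or_lt_of_le hle with h | h
      · exact Or.inl h
      · exact Or.inr ⟨hi, h⟩
    · rintro (rfl | ⟨hi, hlt⟩)
      · exact ⟨htS, le_refl _⟩
      · exact ⟨hi, le_of_lt hlt⟩
  have htnotpre : t ∉ pre := by simp [hpredef]
  have hsum_ins : ∑ i ∈ S.filter (fun i => i ≤ t), W i = W t + ∑ i ∈ pre, W i := by
    rw [hfle, Finset.sum_insert htnotpre]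
  have hpre_le : ∑ i ∈ pre, W i ≤ thr := by
    rcases pre.eq_empty_or_nonempty with h | h
    · simp [h]
    · have hxpre : pre.max' h ∈ pre := pre.max'_mem h
      have hxS : pre.max' h ∈ S := (Finset.mem_filter.mp hxpre).1
      have hxlt : pre.max' h < t := (Finset.mem_filter.mp hxpre).2
      have h1 : ¬ thr < ∑ i ∈ S.filter (fun i => i ≤ pre.max' h), W i := by
        intro hh
        exact absurd (C.min'_le _ (Finset.mem_filter.mpr ⟨hxS, hh⟩)) (not_le.mpr hxlt)
      push_neg at h1
      refine le_trans (Finset.sum_le_sum_of_subset ?_) h1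
      intro i hi
      exact Finset.mem_filter.mpr ⟨(Finset.mem_filter.mp hi).1, pre.le_max' i hi⟩
  by_cases hrest : thr < ∑ i ∈ rest, W i
  · -- recursive case
    have hsub : rest ⊂ S := by
      refine Finset.ssubset_iff_of_subset (Finset.filter_subset _ _) |>.mpr ?_
      exact ⟨t, htS, by simp [hrestdef]⟩
    obtain ⟨g', hg1, hg2, hg3, hg4⟩ := ih rest hsub hrest
    have hg'gt : ∀ i ∈ rest, t < g' i := fun i hi => (Finset.mem_filter.mp (hg1 i hi)).2
    set g : α → α := fun i => if i ≤ t then t else g' i with hgdef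
    have hgle : ∀ i, i ≤ t → g i = t := fun i h => by simp [hgdef, h]
    have hggt : ∀ i, ¬ i ≤ t → g i = g' i := fun i h => by simp [hgdef, h]
    have hfib_t : S.filter (fun i => g i = t) = insert t pre := by
      ext i
      simp only [Finset.mem_filter, Finset.mem_insert, hpredef]
      constructor
      · rintro ⟨hiS, hgi⟩
        by_cases h : i ≤ t
        · rcases eq_or_lt_of_le h with h' | h'
          · exact Or.inl h'
          · exact Or.inr ⟨hiS, h'⟩
        · exfalso
          have hirest : i ∈ rest := Finset.mem_filter.mpr ⟨hiS, not_le.mp h⟩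
          rw [hggt i h] at hgi
          exact absurd hgi (ne_of_gt (hg'gt i hirest))
      · rintro (rfl | ⟨hiS, hlt⟩)
        · exact ⟨htS, hgle _ (le_refl _)⟩
        · exact ⟨hiS, hgle _ (le_of_lt hlt)⟩
    have hfib_ne : ∀ e, e ≠ t → S.filter (fun i => g i = e)
        = rest.filter (fun i => g' i = e) := by
      intro e he
      ext i
      simp only [Finset.mem_filter, hrestdef]
      constructor
      · rintro ⟨hiS, hgi⟩
        by_cases h : i ≤ t
        · rw [hgle i h] at hgi; exact absurd hgi (fun hh => he hh.symm)
        · rw [hggt i h] at hgi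
          exact ⟨⟨hiS, not_le.mp h⟩, hgi⟩
      · rintro ⟨⟨hiS, hti⟩, hgi⟩
        exact ⟨hiS, by rw [hggt i (not_le.mpr hti)]; exact hgi⟩
    refine ⟨g, ?_, ?_, ?_, ?_⟩
    · intro i hi
      by_cases h : i ≤ t
      · rw [hgle i h]; exact htS
      · rw [hggt i h]
        exact (Finset.mem_filter.mp (hg1 i (Finset.mem_filter.mpr ⟨hi, not_le.mp h⟩))).1
    · -- clause 2
      intro e he
      by_cases h : e = t
      · subst h
        rw [hfib_t, Finset.sum_insert htnotpre]
        omega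
      · rw [hfib_ne e h]
        apply hg2
        obtain ⟨i, hiS, hgi⟩ := he
        by_cases hle : i ≤ t
        · rw [hgle i hle] at hgi; exact absurd hgi (fun hh => h hh.symm)
        · rw [hggt i hle] at hgi
          exact ⟨i, Finset.mem_filter.mpr ⟨hiS, not_le.mp hle⟩, hgi⟩
    · -- clause 3
      intro e
      by_cases h : e = t
      · subst h
        have heq : S.filter (fun i => g i = t ∧ i < t) = pre := by
          rw [← Finset.filter_filter, hfib_t]
          ext i
          simp only [Finset.mem_filter, Finset.mem_insert, hpredef]
          constructor
          · rintro ⟨rfl | ⟨hiS, hlt⟩, hlt2⟩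
            · exact absurd hlt2 (lt_irrefl _)
            · exact ⟨hiS, hlt⟩
          · rintro ⟨hiS, hlt⟩
            exact ⟨Or.inr ⟨hiS, hlt⟩, hlt⟩
        rw [heq]; exact hpre_le
      · rw [← Finset.filter_filter, hfib_ne e h, Finset.filter_filter]
        exact hg3 e
    · -- clause 4
      intro e
      by_cases h : e = t
      · subst h
        have heq : S.filter (fun i => g i = t ∧ t < i) = ∅ := by
          rw [← Finset.filter_filter, hfib_t]
          apply Finset.filter_false_of_mem
          intro i hi
          simp only [Finset.mem_insert, hpredef, Finset.mem_filter] at hi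
          rcases hi with rfl | ⟨_, hlt⟩
          · exact lt_irrefl _
          · exact fun hh => absurd (lt_trans hlt hh) (lt_irrefl _)
        rw [heq]; simp
      · rw [← Finset.filter_filter, hfib_ne e h, Finset.filter_filter]
        exact hg4 e
  · -- single group case
    push_neg at hrest
    refine ⟨fun _ => t, fun i _ => htS, ?_, ?_, ?_⟩
    · rintro e ⟨i, hiS, rfl⟩
      have : S.filter (fun _ => (t : α) = t) = S := by
        apply Finset.filter_true_of_mem; intro _ _; rfl
      rw [this]; exact htot
    · intro e
      by_cases h : t = e
      · subst h
        have : S.filter (fun i => (t : α) = t ∧ i < t) = pre := by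
          rw [hpredef]; apply Finset.filter_congr
          intro i _; simp
        rw [this]; exact hpre_le
      · have : S.filter (fun i => (t : α) = e ∧ i < e) = ∅ :=
          Finset.filter_false_of_mem (fun i _ hh => h hh.1)
        rw [this]; simp
    · intro e
      by_cases h : t = e
      · subst h
        have : S.filter (fun i => (t : α) = t ∧ t < i) = rest := by
          rw [hrestdef]; apply Finset.filter_congr
          intro i _; simp
        rw [this]; exact hrest
      · have : S.filter (fun i => (t : α) = e ∧ e < i) = ∅ :=
          Finset.filter_false_of_mem (fun i _ hh => h hh.1)
        rw [this]; simp


lemma sum_fiber_group {J I : Type*} [DecidableEq I] (s : Finset J) (σ : J → I)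
    (f : J → ℕ) (Q : I → Prop) [DecidablePred Q] [DecidableEq J] :
    ∑ j ∈ s.filter (fun j => Q (σ j)), f j
      = ∑ i ∈ (s.image σ).filter Q, ∑ j ∈ s.filter (fun j => σ j = i), f j := by
  rw [← Finset.sum_fiberwise_of_maps_to (g := σ) (t := (s.image σ).filter Q)
    (fun j hj => by
      simp only [Finset.mem_filter, Finset.mem_image] at hj ⊢
      exact ⟨⟨j, hj.1, rfl⟩, hj.2⟩) f]
  refine Finset.sum_congr rfl fun i hi => Finset.sum_congr ?_ fun _ _ => rfl
  simp only [Finset.mem_filter] at hi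
  ext j
  simp only [Finset.mem_filter]
  constructor
  · rintro ⟨⟨hj, _⟩, hji⟩; exact ⟨hj, hji⟩
  · rintro ⟨hj, hji⟩; exact ⟨⟨hj, hji ▸ hi.2⟩, hji⟩

section TAU

variable {n m k : ℕ} (L T : ℕ) (p : Fin n → ℕ) (c : Fin n → Fin k) (σ : Fin n → Fin m)

/-- The key job-level reassignment lemma. -/
theorem tau_exists (s : ℕ) (hσ : IsBlockSchedule c σ) :
    ∃ τ : Fin n → Fin m,
      IsBlockSchedule c τ ∧
      (∀ e, L * mLoad p c s τ e ≤ L * mLoad p c s σ e + 2 * T) ∧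
      (∀ γ e, (univ.filter (fun j => c j = γ ∧ τ j = e)).Nonempty →
        L * ∑ j ∈ univ.filter (fun j => c j = γ ∧ τ j = e), p j ≤ T →
        L * ∑ j ∈ univ.filter (fun j => c j = γ), p j ≤ T) := by
  set w : Fin k → Fin m → ℕ :=
    fun γ i => ∑ j ∈ univ.filter (fun j => c j = γ ∧ σ j = i), p j with hw
  set Mach : Fin k → Finset (Fin m) :=
    fun γ => (univ.filter (fun j => c j = γ)).image σ with hMach
  set Wcls : Fin k → ℕ := fun γ => ∑ j ∈ univ.filter (fun j => c j = γ), p j with hWcls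
  have hWsum : ∀ γ, ∑ i ∈ Mach γ, w γ i = Wcls γ := by
    intro γ
    simp only [hWcls]
    rw [← Finset.sum_fiberwise_of_maps_to (g := σ) (t := Mach γ)
      (fun j hj => Finset.mem_image_of_mem σ hj) p]
    refine Finset.sum_congr rfl fun i _ => ?_
    simp only [hw]
    rw [Finset.filter_filter]
  set Tiny : Fin k → Prop := fun γ => L * Wcls γ ≤ T with hTiny
  have hGM : ∀ γ : Fin k, ∃ g : Fin m → Fin m,
      (Tiny γ → g = id) ∧
      (¬ Tiny γ → (∀ i ∈ Mach γ, g i ∈ Mach γ) ∧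
        (∀ e, (∃ i ∈ Mach γ, g i = e) →
          T < ∑ i ∈ (Mach γ).filter (fun i => g i = e), L * w γ i) ∧
        (∀ e, ∑ i ∈ (Mach γ).filter (fun i => g i = e ∧ i < e), L * w γ i ≤ T) ∧
        (∀ e, ∑ i ∈ (Mach γ).filter (fun i => g i = e ∧ e < i), L * w γ i ≤ T)) := by
    intro γ
    by_cases h : Tiny γ
    · exact ⟨id, fun _ => rfl, fun h' => absurd h h'⟩
    · have htot : T < ∑ i ∈ Mach γ, L * w γ i := by
        rw [← Finset.mul_sum, hWsum γ]
        simp only [hTiny] at h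
        omega
      obtain ⟨g, h1, h2, h3, h4⟩ := greedy_finset (fun i => L * w γ i) T (Mach γ) htot
      refine ⟨g, fun ht => absurd ht h, fun _ => ⟨h1, ?_, ?_, ?_⟩⟩
      · intro e he
        convert h2 e he using 3
      · intro e
        convert h3 e using 3
      · intro e
        convert h4 e using 3
  choose gm hgmTiny hgmProps using hGM
  set τ : Fin n → Fin m := fun j => gm (c j) (σ j) with hτ
  have hτ_tiny : ∀ j, Tiny (c j) → τ j = σ j := by
    intro j h
    simp only [hτ, hgmTiny _ h, id]
  have hσMach : ∀ j, σ j ∈ Mach (c j) := by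
    intro j
    simp only [hMach]
    exact Finset.mem_image_of_mem σ (Finset.mem_filter.mpr ⟨Finset.mem_univ _, rfl⟩)
  have hτMach : ∀ j, τ j ∈ Mach (c j) := by
    intro j
    by_cases h : Tiny (c j)
    · rw [hτ_tiny j h]; exact hσMach j
    · exact (hgmProps (c j) h).1 _ (hσMach j)
  have hτmem : ∀ j, ∃ j', c j' = c j ∧ σ j' = τ j := by
    intro j
    have h := hτMach j
    simp only [hMach, Finset.mem_image, Finset.mem_filter] at h
    obtain ⟨j', ⟨-, hc'⟩, hs'⟩ := h
    exact ⟨j', hc', hs'⟩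
  have hMachJob : ∀ γ i, i ∈ Mach γ → ∃ j, c j = γ ∧ σ j = i := by
    intro γ i hi
    simp only [hMach, Finset.mem_image, Finset.mem_filter] at hi
    obtain ⟨j, ⟨-, hc'⟩, hs'⟩ := hi
    exact ⟨j, hc', hs'⟩
  have hSfib : ∀ γ e, ¬ Tiny γ → ∑ j ∈ univ.filter (fun j => c j = γ ∧ τ j = e), p j
      = ∑ i ∈ (Mach γ).filter (fun i => gm γ i = e), w γ i := by
    intro γ e h
    have hflt : univ.filter (fun j => c j = γ ∧ τ j = e)
        = (univ.filter (fun j => c j = γ)).filter (fun j => gm γ (σ j) = e) := by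
      rw [Finset.filter_filter]
      ext j
      simp only [Finset.mem_filter, Finset.mem_univ, true_and]
      constructor
      · rintro ⟨h1, h2⟩
        refine ⟨h1, ?_⟩
        rw [← h1]
        exact h2
      · rintro ⟨h1, h2⟩
        refine ⟨h1, ?_⟩
        simp only [hτ]
        rw [h1]
        exact h2
    rw [hflt, sum_fiber_group (univ.filter (fun j => c j = γ)) σ p (fun i => gm γ i = e)]
    refine Finset.sum_congr ?_ fun i _ => ?_
    · rfl
    · simp only [hw]
      rw [Finset.filter_filter]
  refine ⟨τ, ?_, ?_, ?_⟩
  · -- block schedule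
    intro i γ₁ γ₂ h1 h2
    have key : ∀ (γ : Fin k) (P : Fin m → Prop), (∃ j, c j = γ ∧ P (τ j)) →
        ∃ j, c j = γ ∧ P (σ j) := by
      rintro γ P ⟨j, hcj, hP⟩
      obtain ⟨j', hc', hs'⟩ := hτmem j
      exact ⟨j', hc'.trans hcj, by rw [hs']; exact hP⟩
    exact hσ i γ₁ γ₂ ⟨key γ₁ (fun x => x ≤ i) h1.1, key γ₁ (fun x => i < x) h1.2⟩
      ⟨key γ₂ (fun x => x ≤ i) h2.1, key γ₂ (fun x => i < x) h2.2⟩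
  · -- load bound
    intro e
    have hdecomp : ∀ ρ : Fin n → Fin m, ∑ j ∈ univ.filter (fun j => ρ j = e), p j
        = ∑ γ ∈ (univ : Finset (Fin k)), ∑ j ∈ univ.filter (fun j => c j = γ ∧ ρ j = e), p j := by
      intro ρ
      rw [← Finset.sum_fiberwise_of_maps_to (g := c) (t := (univ : Finset (Fin k)))
        (fun j _ => Finset.mem_univ _) p]
      refine Finset.sum_congr rfl fun γ _ => Finset.sum_congr ?_ fun _ _ => rfl
      rw [Finset.filter_filter]
      ext j
      simp only [Finset.mem_filter, Finset.mem_univ, true_and]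
      exact and_comm
    set A : Fin k → ℕ := fun γ => if Tiny γ then 0 else
      ∑ i ∈ (Mach γ).filter (fun i => gm γ i = e ∧ i < e), L * w γ i with hA
    set B : Fin k → ℕ := fun γ => if Tiny γ then 0 else
      ∑ i ∈ (Mach γ).filter (fun i => gm γ i = e ∧ e < i), L * w γ i with hB
    have hclass : ∀ γ : Fin k, L * ∑ j ∈ univ.filter (fun j => c j = γ ∧ τ j = e), p j
        ≤ L * w γ e + A γ + B γ := by
      intro γ
      by_cases h : Tiny γ
      · have hflt : univ.filter (fun j => c j = γ ∧ τ j = e)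
            = univ.filter (fun j => c j = γ ∧ σ j = e) := by
          ext j
          simp only [Finset.mem_filter, Finset.mem_univ, true_and]
          constructor
          · rintro ⟨h1, h2⟩
            exact ⟨h1, by rw [← hτ_tiny j (by rw [h1]; exact h)]; exact h2⟩
          · rintro ⟨h1, h2⟩
            exact ⟨h1, by rw [hτ_tiny j (by rw [h1]; exact h)]; exact h2⟩
        rw [hflt]
        simp only [hA, hB, if_pos h, hw]
        omega
      · rw [hSfib γ e h, Finset.mul_sum]
        simp only [hA, hB, if_neg h]
        have tri : ∀ (F : Finset (Fin m)) (f : Fin m → ℕ),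
            ∑ i ∈ F, f i ≤ f e + ∑ i ∈ F.filter (fun i => i < e), f i
              + ∑ i ∈ F.filter (fun i => e < i), f i := by
          intro F f
          rw [← Finset.sum_filter_add_sum_filter_not F (fun i => i < e) f]
          have h2 : ∑ i ∈ F.filter (fun i => ¬ i < e), f i
              ≤ f e + ∑ i ∈ F.filter (fun i => e < i), f i := by
            rw [← Finset.sum_filter_add_sum_filter_not
              (F.filter (fun i => ¬ i < e)) (fun i => i = e) f]
            have ha : ∑ i ∈ (F.filter (fun i => ¬ i < e)).filter (fun i => i = e), f i
                ≤ f e := by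
              have hsub : (F.filter (fun i => ¬ i < e)).filter (fun i => i = e)
                  ⊆ {e} := by
                intro i hi
                simp only [Finset.mem_filter] at hi
                simp [hi.2]
              calc ∑ i ∈ (F.filter (fun i => ¬ i < e)).filter (fun i => i = e), f i
                  ≤ ∑ i ∈ ({e} : Finset (Fin m)), f i := Finset.sum_le_sum_of_subset hsub
                _ = f e := by simp
            have hb : ∑ i ∈ (F.filter (fun i => ¬ i < e)).filter (fun i => ¬ i = e), f i
                ≤ ∑ i ∈ F.filter (fun i => e < i), f i := by
              apply Finset.sum_le_sum_of_subset
              intro i hi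
              simp only [Finset.mem_filter] at hi ⊢
              obtain ⟨⟨hiF, hnlt⟩, hne⟩ := hi
              exact ⟨hiF, lt_of_le_of_ne (not_lt.mp hnlt) (Ne.symm hne)⟩
            omega
          omega
        calc ∑ i ∈ (Mach γ).filter (fun i => gm γ i = e), L * w γ i
            ≤ L * w γ e
              + ∑ i ∈ ((Mach γ).filter (fun i => gm γ i = e)).filter (fun i => i < e), L * w γ i
              + ∑ i ∈ ((Mach γ).filter (fun i => gm γ i = e)).filter (fun i => e < i), L * w γ i :=
            tri _ _
          _ = L * w γ e + ∑ i ∈ (Mach γ).filter (fun i => gm γ i = e ∧ i < e), L * w γ i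
              + ∑ i ∈ (Mach γ).filter (fun i => gm γ i = e ∧ e < i), L * w γ i := by
            rw [Finset.filter_filter, Finset.filter_filter]
    have hAcross : ∀ γ, A γ ≠ 0 → ¬ Tiny γ ∧ ∃ i ∈ Mach γ, gm γ i = e ∧ i < e := by
      intro γ hγ
      by_cases ht : Tiny γ
      · exact absurd (by simp [hA, ht]) hγ
      refine ⟨ht, ?_⟩
      by_contra hno
      push_neg at hno
      apply hγ
      simp only [hA, if_neg ht]
      rw [Finset.filter_false_of_mem, Finset.sum_empty]
      rintro i hi ⟨h1, h2⟩
      exact absurd h2 (not_lt.mpr (hno i hi h1))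
    have hBcross : ∀ γ, B γ ≠ 0 → ¬ Tiny γ ∧ ∃ i ∈ Mach γ, gm γ i = e ∧ e < i := by
      intro γ hγ
      by_cases ht : Tiny γ
      · exact absurd (by simp [hB, ht]) hγ
      refine ⟨ht, ?_⟩
      by_contra hno
      push_neg at hno
      apply hγ
      simp only [hB, if_neg ht]
      rw [Finset.filter_false_of_mem, Finset.sum_empty]
      rintro i hi ⟨h1, h2⟩
      exact absurd h2 (not_lt.mpr (hno i hi h1))
    have hAsum : ∑ γ, A γ ≤ T := by
      by_cases hall : ∀ γ, A γ = 0
      · rw [Finset.sum_eq_zero (fun γ _ => hall γ)]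
        exact Nat.zero_le _
      · push_neg at hall
        obtain ⟨γ0, hγ0⟩ := hall
        obtain ⟨hnt0, i0, hi0M, hi0e, hi0lt⟩ := hAcross γ0 hγ0
        have he1 : 0 < e.val := lt_of_le_of_lt (Nat.zero_le _) (Fin.lt_def.mp hi0lt)
        have hblt : e.val - 1 < m := by omega
        set b : Fin m := ⟨e.val - 1, hblt⟩ with hb
        have hcross : ∀ δ, A δ ≠ 0 →
            ((∃ j, c j = δ ∧ σ j ≤ b) ∧ (∃ j, c j = δ ∧ b < σ j)) := by
          intro δ hδ
          obtain ⟨hnt, i, hiM, hie, hilt⟩ := hAcross δ hδ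
          have heM : e ∈ Mach δ := hie ▸ (hgmProps δ hnt).1 i hiM
          obtain ⟨j, hcj, hsj⟩ := hMachJob δ i hiM
          obtain ⟨j', hcj', hsj'⟩ := hMachJob δ e heM
          refine ⟨⟨j, hcj, ?_⟩, ⟨j', hcj', ?_⟩⟩
          · rw [hsj, Fin.le_def]
            have := Fin.lt_def.mp hilt
            simp only [hb]
            omega
          · rw [hsj', Fin.lt_def]
            simp only [hb]
            omega
        have huniq : ∀ γ, A γ ≠ 0 → γ = γ0 := fun γ hγ =>
          hσ b γ γ0 (hcross γ hγ) (hcross γ0 hγ0)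
        have hsum1 : ∑ γ, A γ = A γ0 := by
          apply Finset.sum_eq_single_of_mem γ0 (Finset.mem_univ _)
          intro γ _ hne
          by_contra h
          exact hne (huniq γ h)
        rw [hsum1]
        have := (hgmProps γ0 hnt0).2.2.1 e
        simp only [hA, if_neg hnt0]
        exact this
    have hBsum : ∑ γ, B γ ≤ T := by
      by_cases hall : ∀ γ, B γ = 0
      · rw [Finset.sum_eq_zero (fun γ _ => hall γ)]
        exact Nat.zero_le _
      · push_neg at hall
        obtain ⟨γ0, hγ0⟩ := hall
        obtain ⟨hnt0, -⟩ := hBcross γ0 hγ0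
        have hcross : ∀ δ, B δ ≠ 0 →
            ((∃ j, c j = δ ∧ σ j ≤ e) ∧ (∃ j, c j = δ ∧ e < σ j)) := by
          intro δ hδ
          obtain ⟨hnt, i, hiM, hie, hilt⟩ := hBcross δ hδ
          have heM : e ∈ Mach δ := hie ▸ (hgmProps δ hnt).1 i hiM
          obtain ⟨j, hcj, hsj⟩ := hMachJob δ i hiM
          obtain ⟨j', hcj', hsj'⟩ := hMachJob δ e heM
          refine ⟨⟨j', hcj', le_of_eq hsj'⟩, ⟨j, hcj, by rw [hsj]; exact hilt⟩⟩
        have huniq : ∀ γ, B γ ≠ 0 → γ = γ0 := fun γ hγ =>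
          hσ e γ γ0 (hcross γ hγ) (hcross γ0 hγ0)
        have hsum1 : ∑ γ, B γ = B γ0 := by
          apply Finset.sum_eq_single_of_mem γ0 (Finset.mem_univ _)
          intro γ _ hne
          by_contra h
          exact hne (huniq γ h)
        rw [hsum1]
        have := (hgmProps γ0 hnt0).2.2.2 e
        simp only [hB, if_neg hnt0]
        exact this
    have hcard : ((univ.filter (fun j => τ j = e)).image c).card
        ≤ ((univ.filter (fun j => σ j = e)).image c).card := by
      apply Finset.card_le_card
      intro γ hγ
      simp only [Finset.mem_image, Finset.mem_filter, Finset.mem_univ, true_and] at hγ ⊢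
      obtain ⟨j, hjτ, hcj⟩ := hγ
      obtain ⟨j', hc', hs'⟩ := hτmem j
      exact ⟨j', by rw [hs']; exact hjτ, by rw [hc', hcj]⟩
    have hnewsum : L * ∑ j ∈ univ.filter (fun j => τ j = e), p j
        ≤ L * ∑ j ∈ univ.filter (fun j => σ j = e), p j + 2 * T := by
      rw [hdecomp τ, hdecomp σ, Finset.mul_sum, Finset.mul_sum]
      have step1 : ∑ γ, L * ∑ j ∈ univ.filter (fun j => c j = γ ∧ τ j = e), p j
          ≤ ∑ γ, (L * w γ e + A γ + B γ) := Finset.sum_le_sum (fun γ _ => hclass γ)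
      have step2 : ∑ γ, (L * w γ e + A γ + B γ)
          = ∑ γ, L * w γ e + ∑ γ, A γ + ∑ γ, B γ := by
        rw [Finset.sum_add_distrib, Finset.sum_add_distrib]
      have step3 : ∑ γ, L * w γ e
          = ∑ γ, L * ∑ j ∈ univ.filter (fun j => c j = γ ∧ σ j = e), p j := by
        refine Finset.sum_congr rfl fun γ _ => ?_
        simp only [hw]
      omega
    simp only [mLoad]
    have hc2 : L * (s * ((univ.filter (fun j => τ j = e)).image c).card)
        ≤ L * (s * ((univ.filter (fun j => σ j = e)).image c).card) :=
      Nat.mul_le_mul_left _ (Nat.mul_le_mul_left _ hcard)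
    rw [Nat.mul_add, Nat.mul_add]
    omega
  · -- tiny condition
    intro γ e hne hle
    by_cases h : Tiny γ
    · simpa only [hTiny, hWcls] using h
    · exfalso
      obtain ⟨j, hj⟩ := hne
      simp only [Finset.mem_filter, Finset.mem_univ, true_and] at hj
      obtain ⟨hcj, hτj⟩ := hj
      have hex : ∃ i ∈ Mach γ, gm γ i = e := by
        refine ⟨σ j, by rw [← hcj]; exact hσMach j, ?_⟩
        have hjj : τ j = gm γ (σ j) := by
          simp only [hτ]
          rw [hcj]
        rw [← hjj]
        exact hτj
      have hgt := (hgmProps γ h).2.1 e hex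
      rw [← Finset.mul_sum, ← hSfib γ e h] at hgt
      omega

end TAU

/-- given a block-schedule `σ` with makespan `M`, there are a merging
`Q` of the jobs within classes (a partition of the jobs whose blocks respect
classes, blocks becoming the merged jobs with summed sizes `∑ j ∈ B, p j` and the
common class `cQ B`) and a block-schedule `σ'` of the merged instance with makespan
`M'` satisfying `L·M' ≤ L·M + 4T`, in which every tiny merged job
(`L·size ≤ T`) belongs to a tiny class (`L·workload ≤ T`). -/
theorem merging_tiny_jobs_into_tiny_classes (n m k s L T : ℕ)
    (hn : 1 ≤ n) (hm : 1 ≤ m) (hs : 1 ≤ s) (hL : 1 ≤ L)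
    (p : Fin n → ℕ) (hp : ∀ j, 1 ≤ p j)
    (c : Fin n → Fin k) (hc : Function.Surjective c)
    (σ : Fin n → Fin m) (hσ : IsBlockSchedule c σ) :
    ∃ (Q : Finpartition (univ : Finset (Fin n)))
      (cQ : {B // B ∈ Q.parts} → Fin k)
      (σ' : {B // B ∈ Q.parts} → Fin m),
      -- each block of the merging lies within a single class, of value `cQ B`
      (∀ B : {B // B ∈ Q.parts}, ∀ j ∈ B.1, c j = cQ B) ∧
      -- `σ'` is a block-schedule of the merged instance
      gIsBlockSchedule cQ σ' ∧
      -- its makespan `M'` satisfies `L·M' ≤ L·M + 4T`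
      L * gMakespan (fun B : {B // B ∈ Q.parts} => ∑ j ∈ B.1, p j) cQ s σ'
        ≤ L * mMakespan p c s σ + 4 * T ∧
      -- tiny merged jobs occur only in tiny classes
      (∀ B : {B // B ∈ Q.parts}, L * (∑ j ∈ B.1, p j) ≤ T →
        L * (∑ j ∈ univ.filter (fun j => c j = cQ B), p j) ≤ T) := by
  classical
  obtain ⟨τ, hτBS, hτload, hτtiny⟩ := tau_exists L T p c σ s hσ
  have hequiv : Equivalence (fun a b : Fin n => c a = c b ∧ τ a = τ b) :=
    ⟨fun a => ⟨rfl, rfl⟩, fun h => ⟨h.1.symm, h.2.symm⟩,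
      fun h1 h2 => ⟨h1.1.trans h2.1, h1.2.trans h2.2⟩⟩
  set sd : Setoid (Fin n) := ⟨fun a b => c a = c b ∧ τ a = τ b, hequiv⟩ with hsd
  set Q := Finpartition.ofSetoid sd with hQ
  have hrep : ∀ B : {B // B ∈ Q.parts}, ∃ a, a ∈ B.1 ∧
      ∀ j, j ∈ B.1 ↔ (c j = c a ∧ τ j = τ a) := by
    rintro ⟨B, hB⟩
    obtain ⟨a, ha⟩ := Q.nonempty_of_mem_parts hB
    refine ⟨a, ha, fun j => ?_⟩
    have hpart : Q.part a = B := Q.part_eq_of_mem hB ha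
    constructor
    · intro hj
      have : j ∈ Q.part a := hpart ▸ hj
      rw [hQ, Finpartition.mem_part_ofSetoid_iff_rel] at this
      exact ⟨this.1.symm, this.2.symm⟩
    · rintro ⟨h1, h2⟩
      have : j ∈ Q.part a := by
        rw [hQ, Finpartition.mem_part_ofSetoid_iff_rel]
        exact ⟨h1.symm, h2.symm⟩
      exact hpart ▸ this
  choose rep hrepmem hrepiff using hrep
  refine ⟨Q, fun B => c (rep B), fun B => τ (rep B), ?_, ?_, ?_, ?_⟩
  · intro B j hj
    exact ((hrepiff B j).mp hj).1
  · intro i γ₁ γ₂ h1 h2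
    have key : ∀ (γ : Fin k) (P : Fin m → Prop),
        (∃ B, c (rep B) = γ ∧ P (τ (rep B))) → ∃ j, c j = γ ∧ P (τ j) := by
      rintro γ P ⟨B, hc1, hP⟩
      exact ⟨rep B, hc1, hP⟩
    exact hτBS i γ₁ γ₂ ⟨key γ₁ (fun x => x ≤ i) h1.1, key γ₁ (fun x => i < x) h1.2⟩
      ⟨key γ₂ (fun x => x ≤ i) h2.1, key γ₂ (fun x => i < x) h2.2⟩
  · -- makespan
    have hgl : ∀ e, gLoad (fun B : {B // B ∈ Q.parts} => ∑ j ∈ B.1, p j)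
        (fun B => c (rep B)) s (fun B => τ (rep B)) e ≤ mLoad p c s τ e := by
      intro e
      simp only [gLoad, mLoad]
      have hdisj : (↑(univ.filter (fun B : {B // B ∈ Q.parts} => τ (rep B) = e)) :
          Set {B // B ∈ Q.parts}).PairwiseDisjoint (fun B => B.1) := by
        intro B hB B' hB' hne
        show Disjoint B.1 B'.1
        rw [Finset.disjoint_left]
        intro j hj hj'
        exact hne (Subtype.ext (Q.eq_of_mem_parts B.2 B'.2 hj hj'))
      have hsum1 : ∑ B ∈ univ.filter (fun B : {B // B ∈ Q.parts} => τ (rep B) = e),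
          ∑ j ∈ B.1, p j ≤ ∑ j ∈ univ.filter (fun j => τ j = e), p j := by
        rw [← Finset.sum_biUnion hdisj]
        apply Finset.sum_le_sum_of_subset
        intro j hj
        simp only [Finset.mem_biUnion, Finset.mem_filter, Finset.mem_univ, true_and] at hj ⊢
        obtain ⟨B, hBe, hjB⟩ := hj
        rw [((hrepiff B j).mp hjB).2]
        exact hBe
      have hsum2 : ((univ.filter (fun B : {B // B ∈ Q.parts} => τ (rep B) = e)).image
          (fun B => c (rep B))).card ≤ ((univ.filter (fun j => τ j = e)).image c).card := by
        apply Finset.card_le_card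
        intro γ hγ
        simp only [Finset.mem_image, Finset.mem_filter, Finset.mem_univ, true_and] at hγ ⊢
        obtain ⟨B, hBe, hBc⟩ := hγ
        exact ⟨rep B, hBe, hBc⟩
      have := Nat.mul_le_mul_left s hsum2
      omega
    obtain ⟨e0, -, he0⟩ := Finset.exists_mem_eq_sup (univ : Finset (Fin m))
      ⟨⟨0, hm⟩, Finset.mem_univ _⟩
      (gLoad (fun B : {B // B ∈ Q.parts} => ∑ j ∈ B.1, p j) (fun B => c (rep B)) s
        (fun B => τ (rep B)))
    have h2 := hgl e0
    have h3 := hτload e0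
    have h4 : mLoad p c s σ e0 ≤ mMakespan p c s σ := Finset.le_sup (Finset.mem_univ _)
    have h5 := Nat.mul_le_mul_left L h4
    have h6 := Nat.mul_le_mul_left L h2
    show L * univ.sup (gLoad (fun B : {B // B ∈ Q.parts} => ∑ j ∈ B.1, p j)
      (fun B => c (rep B)) s (fun B => τ (rep B))) ≤ L * mMakespan p c s σ + 4 * T
    rw [he0]
    omega
  · -- tiny
    intro B hB
    have hBeq : univ.filter (fun j => c j = c (rep B) ∧ τ j = τ (rep B)) = B.1 := by
      ext j
      simp only [Finset.mem_filter, Finset.mem_univ, true_and]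
      exact (hrepiff B j).symm
    have hne : (univ.filter (fun j => c j = c (rep B) ∧ τ j = τ (rep B))).Nonempty := by
      rw [hBeq]
      exact ⟨rep B, hrepmem B⟩
    exact hτtiny (c (rep B)) (τ (rep B)) hne (by rw [hBeq]; exact hB)
end
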